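/- Let L ⊂ ℝⁿ be a linear subspace and let q be a polynomial on ℝⁿ vanishing identically on L. Then there exists a constant C such that q(x)² ≤ C · dist(x, L)² for all x in the closed unit ball. In particular, if p is a quadratic form with p(x) ≥ c·dist(x,L)² for some c > 0, then q²/p is bounded on B_1 ∖ L. -/

import Mathlib

open Metric

lemma stmt8_contDiff {n : ℕ} (q : MvPolynomial (Fin n) ℝ) :
    ContDiff ℝ ⊤ (fun x : EuclideanSpace ℝ (Fin n) => MvPolynomial.eval (fun i => x i) q) := by
  induction q using MvPolynomial.induction_on with
  | C a => simpa using contDiff_const (c := a)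
  | add p q hp hq => simpa using hp.add hq
  | mul_X p i hp => simpa using hp.mul (EuclideanSpace.proj (𝕜 := ℝ) i).contDiff

lemma stmt8_infDist {n : ℕ} (L : Submodule ℝ (EuclideanSpace ℝ (Fin n)))
    (x : EuclideanSpace ℝ (Fin n)) :
    infDist x (L : Set _) = ‖x - (L.orthogonalProjectionOnto x : EuclideanSpace ℝ (Fin n))‖ := by
  rw [infDist_eq_iInf, ← Submodule.starProjection_apply, Submodule.starProjection_minimal]
  simp [dist_eq_norm]

/-- Let `L ⊆ ℝⁿ` be a linear subspace and `q` a polynomial vanishing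
identically on `L`. Then there is `C` with `q(x)² ≤ C · dist(x, L)²` on the closed unit
ball. In particular, if `p ≥ c · dist(·, L)²` with `c > 0` (e.g. a positive semidefinite
quadratic form vanishing exactly on `L`), then `q²/p` is bounded on `B₁ \ L`. -/
theorem stmt8 {n : ℕ} (L : Submodule ℝ (EuclideanSpace ℝ (Fin n)))
    (q : MvPolynomial (Fin n) ℝ)
    (hq : ∀ x ∈ L, MvPolynomial.eval (fun i => x i) q = 0) :
    (∃ C : ℝ, ∀ x ∈ closedBall (0 : EuclideanSpace ℝ (Fin n)) 1,
      (MvPolynomial.eval (fun i => x i) q)^2 ≤ C * (infDist x (L : Set _))^2) ∧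
    ∀ (p : EuclideanSpace ℝ (Fin n) → ℝ) (c : ℝ), 0 < c →
      (∀ x, c * (infDist x (L : Set _))^2 ≤ p x) →
      ∃ C' : ℝ, ∀ x ∈ closedBall (0 : EuclideanSpace ℝ (Fin n)) 1,
        x ∉ (L : Set _) → (MvPolynomial.eval (fun i => x i) q)^2 / p x ≤ C' := by
  set f : EuclideanSpace ℝ (Fin n) → ℝ :=
    fun x => MvPolynomial.eval (fun i => x i) q with hf
  have hcd : ContDiff ℝ ⊤ f := stmt8_contDiff q
  -- bound on the derivative on the ball of radius 2
  obtain ⟨M, hM⟩ := (isCompact_closedBall (0 : EuclideanSpace ℝ (Fin n)) 2).exists_bound_of_continuousOn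
    ((hcd.continuous_fderiv (by simp)).continuousOn (s := closedBall 0 2))
  set M' : ℝ := max M 0 with hM'
  have hM'0 : 0 ≤ M' := le_max_right _ _
  have hlip : ∀ x ∈ closedBall (0 : EuclideanSpace ℝ (Fin n)) 2,
      ∀ y ∈ closedBall (0 : EuclideanSpace ℝ (Fin n)) 2, ‖f y - f x‖ ≤ M' * ‖y - x‖ := by
    intro x hx y hy
    exact (convex_closedBall _ _).norm_image_sub_le_of_norm_fderiv_le
      (fun z hz => (hcd.differentiable (by simp)).differentiableAt)
      (fun z hz => le_trans (hM z hz) (le_max_left _ _)) hx hy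
  -- the key pointwise bound
  have key : ∀ x ∈ closedBall (0 : EuclideanSpace ℝ (Fin n)) 1,
      (f x)^2 ≤ M'^2 * (infDist x (L : Set _))^2 := by
    intro x hx
    set y : EuclideanSpace ℝ (Fin n) := (L.orthogonalProjectionOnto x : EuclideanSpace ℝ (Fin n))
      with hy
    have hd : infDist x (L : Set _) = ‖x - y‖ := stmt8_infDist L x
    have hxnorm : ‖x‖ ≤ 1 := by simpa [dist_eq_norm] using hx
    have hdle : infDist x (L : Set _) ≤ 1 :=
      le_trans (infDist_le_dist_of_mem L.zero_mem) (by simpa [dist_eq_norm] using hxnorm)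
    have hx2 : x ∈ closedBall (0 : EuclideanSpace ℝ (Fin n)) 2 := by
      simp only [mem_closedBall, dist_eq_norm, sub_zero]; linarith
    have hy2 : y ∈ closedBall (0 : EuclideanSpace ℝ (Fin n)) 2 := by
      have : ‖y‖ ≤ ‖y - x‖ + ‖x‖ := by
        simpa using norm_add_le (y - x) x
      have h1 : ‖y - x‖ ≤ 1 := by rw [norm_sub_rev]; rw [hd] at hdle; linarith
      simp only [mem_closedBall, dist_eq_norm, sub_zero]; linarith
    have hfy : f y = 0 := hq y (L.orthogonalProjectionOnto x).2
    have := hlip y hy2 x hx2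
    rw [hfy, sub_zero, ← hd] at this
    calc (f x)^2 = ‖f x‖^2 := by rw [Real.norm_eq_abs, sq_abs]
      _ ≤ (M' * infDist x (L : Set _))^2 := by
          apply sq_le_sq' _ this
          have : 0 ≤ M' * infDist x (L : Set _) :=
            mul_nonneg hM'0 (infDist_nonneg)
          have h2 : 0 ≤ ‖f x‖ := norm_nonneg _
          linarith
      _ = M'^2 * (infDist x (L : Set _))^2 := by ring
  refine ⟨⟨M'^2, key⟩, ?_⟩
  intro p c hc hp
  refine ⟨M'^2 / c, ?_⟩
  intro x hx hxL
  have hd0 : 0 < infDist x (L : Set _) := by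
    have hcl : IsClosed (L : Set (EuclideanSpace ℝ (Fin n))) :=
      Submodule.closed_of_finiteDimensional L
    exact (hcl.notMem_iff_infDist_pos ⟨0, L.zero_mem⟩).1 hxL
  have hpx : 0 < p x := lt_of_lt_of_le (by positivity) (hp x)
  rw [div_le_iff₀ hpx]
  calc (f x)^2 ≤ M'^2 * (infDist x (L : Set _))^2 := key x hx
    _ = M'^2 / c * (c * (infDist x (L : Set _))^2) := by field_simp
    _ ≤ M'^2 / c * p x := by
        apply mul_le_mul_of_nonneg_left (hp x) (by positivity)
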